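/- In the recursion operator setting (∞ ∉ Λ, R = P∞^{-1}P₀ on L^⊥/L), R is diagonalizable if and only if for each λ ∈ Λ the kernel of the restriction P∞|_{Ker P_λ} has dimension exactly r. -/

import Mathlib

open Module LinearMap

variable {V : Type*} [AddCommGroup V] [Module ℂ V]

/-- The pencil `P_λ = P₀ - λ P_∞` of bilinear forms, `λ ∈ ℂ ∪ {∞}` (`∞` is `none`,
with `P_∞ := P∞`). -/
noncomputable def pencil (P0 Pinf : V →ₗ[ℂ] V →ₗ[ℂ] ℂ) : Option ℂ → (V →ₗ[ℂ] V →ₗ[ℂ] ℂ)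
  | none => Pinf
  | some l => P0 - l • Pinf

/-- The generic (minimal) corank `r` of the pencil. -/
noncomputable def genericCorank (P0 Pinf : V →ₗ[ℂ] V →ₗ[ℂ] ℂ) : ℕ :=
  sInf (Set.range fun l : Option ℂ => finrank ℂ ↥(LinearMap.ker (pencil P0 Pinf l)))

/-- The exceptional set `Λ` of pencil parameters where the corank exceeds `r`. -/
def exceptional (P0 Pinf : V →ₗ[ℂ] V →ₗ[ℂ] ℂ) : Set (Option ℂ) :=
  {l | genericCorank P0 Pinf < finrank ℂ ↥(LinearMap.ker (pencil P0 Pinf l))}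

/-- `L = Σ_{λ ∉ Λ} Ker P_λ`. -/
noncomputable def Lspace (P0 Pinf : V →ₗ[ℂ] V →ₗ[ℂ] ℂ) : Submodule ℂ V :=
  ⨆ l ∈ {l : Option ℂ | l ∉ exceptional P0 Pinf}, LinearMap.ker (pencil P0 Pinf l)

/-- The common skew-orthogonal complement `L^⊥` (computed here with `P_∞`). -/
noncomputable def Lperp (P0 Pinf : V →ₗ[ℂ] V →ₗ[ℂ] ℂ) : Submodule ℂ V :=
  LinearMap.BilinForm.orthogonal (pencil P0 Pinf none) (Lspace P0 Pinf)

/-- `L` viewed as a submodule of `L^⊥`. -/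
noncomputable def LinPerp (P0 Pinf : V →ₗ[ℂ] V →ₗ[ℂ] ℂ) : Submodule ℂ ↥(Lperp P0 Pinf) :=
  (Lspace P0 Pinf).comap (Lperp P0 Pinf).subtype

/-- The quotient `L^⊥ / L`, carrying the recursion operator `R = P_∞⁻¹ P₀`. -/
abbrev Qspace (P0 Pinf : V →ₗ[ℂ] V →ₗ[ℂ] ℂ) := ↥(Lperp P0 Pinf) ⧸ LinPerp P0 Pinf

/-! ### Auxiliary lemmas -/

lemma skew_of_diag {B : V →ₗ[ℂ] V →ₗ[ℂ] ℂ} (h : ∀ v, B v v = 0) (x y : V) :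
    B x y = - B y x := by
  have h2 := h (x + y)
  simp only [map_add, LinearMap.add_apply, h x, h y] at h2
  linear_combination h2

open Matrix in
lemma card_le_finrank_map_of_det_ne_zero [FiniteDimensional ℂ V]
    (f : V →ₗ[ℂ] V →ₗ[ℂ] ℂ) (N : Submodule ℂ V)
    {k : ℕ} {x y : Fin k → V} (hx : ∀ i, x i ∈ N)
    (hdet : (Matrix.of fun i j => f (x i) (y j)).det ≠ 0) :
    k ≤ finrank ℂ (N.map f) := by
  classical
  set M : Matrix (Fin k) (Fin k) ℂ := Matrix.of fun i j => f (x i) (y j) with hM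
  have hindep : LinearIndependent ℂ fun i => f (x i) := by
    rw [Fintype.linearIndependent_iff]
    intro c hc i
    have h1 : Matrix.vecMul c M = 0 := by
      funext j
      have h2 := LinearMap.congr_fun hc (y j)
      simpa [Matrix.vecMul, dotProduct, hM, LinearMap.sum_apply] using h2
    have h3 : c = 0 := by
      have h4 := congrArg (fun v => Matrix.vecMul v M⁻¹) h1
      simpa [Matrix.vecMul_vecMul, Matrix.mul_nonsing_inv M
        ((isUnit_iff_ne_zero).2 hdet), Matrix.zero_vecMul] using h4
    exact congrFun h3 i
  have hmem : ∀ i, f (x i) ∈ N.map f := fun i => Submodule.mem_map_of_mem (hx i)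
  let g : Fin k → ↥(N.map f) := fun i => ⟨f (x i), hmem i⟩
  have hg : LinearIndependent ℂ g := by
    apply LinearIndependent.of_comp (N.map f).subtype
    exact hindep
  simpa using hg.fintype_card_le_finrank

lemma exists_det_ne_zero [FiniteDimensional ℂ V]
    (f : V →ₗ[ℂ] V →ₗ[ℂ] ℂ) (N : Submodule ℂ V) {k : ℕ}
    (hk : k ≤ finrank ℂ (N.map f)) :
    ∃ (x y : Fin k → V), (∀ i, x i ∈ N) ∧
      (Matrix.of fun i j => f (x i) (y j)).det ≠ 0 := by
  classical
  obtain ⟨φ, hφ⟩ := exists_linearIndependent_of_le_finrank (R := ℂ) (M := ↥(N.map f)) hk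
  have hψ : LinearIndependent ℂ fun i => ((φ i : V →ₗ[ℂ] ℂ)) :=
    hφ.map' (N.map f).subtype (Submodule.ker_subtype _)
  have hchoice : ∀ i, ∃ v, v ∈ N ∧ f v = (φ i : V →ₗ[ℂ] ℂ) := by
    intro i
    obtain ⟨v, hv, hfv⟩ := Submodule.mem_map.mp (φ i).2
    exact ⟨v, hv, hfv⟩
  choose x hxN hxf using hchoice
  let Φ : V →ₗ[ℂ] (Fin k → ℂ) := LinearMap.pi fun i => (φ i : V →ₗ[ℂ] ℂ)
  have hsurj : Function.Surjective Φ := by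
    rw [← LinearMap.dualMap_injective_iff]
    rw [← LinearMap.ker_eq_bot, LinearMap.ker_eq_bot']
    intro c hc
    have hc' : ∀ v : V, c (Φ v) = 0 := fun v => LinearMap.congr_fun hc v
    have hrep : ∀ w : Fin k → ℂ, c w = ∑ i, w i * c (Pi.single i 1) := by
      intro w
      have hw : w = ∑ i, w i • (Pi.single i (1:ℂ) : Fin k → ℂ) := by
        funext j
        simp [Pi.single_apply, Finset.sum_apply, mul_ite]
      conv_lhs => rw [hw]
      simp [map_sum, map_smul, smul_eq_mul]
    have hzero : ∀ i, c (Pi.single i 1) = 0 := by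
      have h0 : (∑ i, c (Pi.single i 1) • (φ i : V →ₗ[ℂ] ℂ)) = 0 := by
        apply LinearMap.ext; intro v
        have := hc' v
        rw [hrep (Φ v)] at this
        simpa [Φ, LinearMap.pi_apply, mul_comm] using this
      have := Fintype.linearIndependent_iff.mp hψ _ h0
      exact this
    apply LinearMap.ext
    intro w
    rw [hrep w]
    simp [hzero]
  choose y hy using fun j => hsurj (Pi.single j 1)
  refine ⟨x, y, hxN, ?_⟩
  have : (Matrix.of fun i j => f (x i) (y j)) = (1 : Matrix (Fin k) (Fin k) ℂ) := by
    ext i j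
    have := congrFun (hy j) i
    simp only [Φ, LinearMap.pi_apply] at this
    simp [Matrix.one_apply, hxf, this, Pi.single_apply, eq_comm]
  rw [this, Matrix.det_one]
  exact one_ne_zero

open Polynomial in
lemma det_pencil_poly {k : ℕ} (P0 Pinf : V →ₗ[ℂ] V →ₗ[ℂ] ℂ) (x y : Fin k → V) :
    ∃ p : Polynomial ℂ,
      (∀ μ : ℂ, p.eval μ =
        (Matrix.of fun i j => P0 (x i) (y j) - μ * Pinf (x i) (y j)).det) ∧
      (p = 0 → (Matrix.of fun i j => Pinf (x i) (y j)).det = 0) := by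
  classical
  set A : Matrix (Fin k) (Fin k) ℂ[X] :=
    Matrix.of fun i j => C (P0 (x i) (y j)) - X * C (Pinf (x i) (y j)) with hA
  have hevalA : ∀ μ : ℂ, eval μ A.det =
      (Matrix.of fun i j => P0 (x i) (y j) - μ * Pinf (x i) (y j)).det := by
    intro μ
    rw [show (eval μ A.det) = (evalRingHom μ) A.det from rfl, RingHom.map_det]
    congr 1
    ext i j
    simp only [hA, RingHom.mapMatrix_apply, Matrix.map_apply, Matrix.of_apply, map_sub,
      map_mul, coe_evalRingHom, eval_sub, eval_mul, eval_C, eval_X]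
  refine ⟨A.det, hevalA, ?_⟩
  intro hp
  set Bq : Matrix (Fin k) (Fin k) ℂ[X] :=
    Matrix.of fun i j => X * C (P0 (x i) (y j)) - C (Pinf (x i) (y j)) with hBq
  have hevalB : ∀ t : ℂ, eval t Bq.det =
      (Matrix.of fun i j => t * P0 (x i) (y j) - Pinf (x i) (y j)).det := by
    intro t
    rw [show (eval t Bq.det) = (evalRingHom t) Bq.det from rfl, RingHom.map_det]
    congr 1
    ext i j
    simp only [hBq, RingHom.mapMatrix_apply, Matrix.map_apply, Matrix.of_apply, map_sub,
      map_mul, coe_evalRingHom, eval_sub, eval_mul, eval_C, eval_X]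
  have hroot : ∀ t : ℂ, t ≠ 0 → eval t Bq.det = 0 := by
    intro t ht
    have h1 : (Matrix.of fun i j => t * P0 (x i) (y j) - Pinf (x i) (y j)) =
        t • (Matrix.of fun i j => P0 (x i) (y j) - t⁻¹ * Pinf (x i) (y j)) := by
      ext i j
      simp only [Matrix.of_apply, Matrix.smul_apply, smul_eq_mul]
      rw [mul_sub, ← mul_assoc, mul_inv_cancel₀ ht, one_mul]
    rw [hevalB, h1, Matrix.det_smul]
    have h2 := hevalA t⁻¹
    rw [hp] at h2
    simp only [eval_zero] at h2
    rw [← h2]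
    ring
  have hBq0 : Bq.det = 0 := by
    apply Polynomial.eq_zero_of_infinite_isRoot
    apply Set.Infinite.mono (s := {t : ℂ | t ≠ 0})
    · intro t ht
      exact hroot t ht
    · exact Set.Finite.infinite_compl (Set.finite_singleton 0)
  have h3 := hevalB 0
  rw [hBq0] at h3
  simp only [eval_zero, zero_mul, zero_sub] at h3
  have h4 : (Matrix.of fun i j => -Pinf (x i) (y j)) =
      -(Matrix.of fun i j => Pinf (x i) (y j)) := by ext i j; simp
  rw [h4, Matrix.det_neg] at h3
  have h5 : ((-1 : ℂ) ^ Fintype.card (Fin k)) ≠ 0 := pow_ne_zero _ (by norm_num)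
  exact (mul_eq_zero.mp h3.symm).resolve_left h5

lemma finrank_map_add_finrank_inf_ker [FiniteDimensional ℂ V]
    (f : V →ₗ[ℂ] V →ₗ[ℂ] ℂ) (N : Submodule ℂ V) :
    finrank ℂ (N.map f) + finrank ℂ ↥(N ⊓ LinearMap.ker f) = finrank ℂ N := by
  have h1 := (f.domRestrict N).finrank_range_add_finrank_ker
  rw [LinearMap.range_domRestrict, LinearMap.ker_domRestrict] at h1
  have h2 : finrank ℂ ↥(Submodule.comap N.subtype (LinearMap.ker f)) =
      finrank ℂ ↥(N ⊓ LinearMap.ker f) := by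
    rw [← Submodule.map_comap_subtype]
    exact (Submodule.equivMapOfInjective N.subtype N.injective_subtype _).finrank_eq
  rw [h2] at h1
  exact h1

/-! ### Basic pencil lemmas -/

lemma pencil_some_apply (P0 Pinf : V →ₗ[ℂ] V →ₗ[ℂ] ℂ) (μ : ℂ) (x y : V) :
    pencil P0 Pinf (some μ) x y = P0 x y - μ * Pinf x y := by
  simp [pencil]

lemma pencil_none_apply (P0 Pinf : V →ₗ[ℂ] V →ₗ[ℂ] ℂ) (x y : V) :
    pencil P0 Pinf none x y = Pinf x y := rfl

lemma pencil_none_eq (P0 Pinf : V →ₗ[ℂ] V →ₗ[ℂ] ℂ) : pencil P0 Pinf none = Pinf := rfl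

lemma ker_pencil_some {P0 Pinf : V →ₗ[ℂ] V →ₗ[ℂ] ℂ} {μ : ℂ} {x : V}
    (hx : x ∈ LinearMap.ker (pencil P0 Pinf (some μ))) (y : V) :
    P0 x y = μ * Pinf x y := by
  have h := LinearMap.congr_fun (LinearMap.mem_ker.mp hx) y
  rw [pencil_some_apply, LinearMap.zero_apply, sub_eq_zero] at h
  exact h

lemma gc_le (P0 Pinf : V →ₗ[ℂ] V →ₗ[ℂ] ℂ) (l : Option ℂ) :
    genericCorank P0 Pinf ≤ finrank ℂ ↥(LinearMap.ker (pencil P0 Pinf l)) :=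
  Nat.sInf_le ⟨l, rfl⟩

lemma not_exceptional_iff {P0 Pinf : V →ₗ[ℂ] V →ₗ[ℂ] ℂ} {l : Option ℂ} :
    l ∉ exceptional P0 Pinf ↔
      finrank ℂ ↥(LinearMap.ker (pencil P0 Pinf l)) = genericCorank P0 Pinf := by
  constructor
  · intro h
    exact le_antisymm (not_lt.mp h) (gc_le P0 Pinf l)
  · intro h
    simp only [exceptional, Set.mem_setOf_eq, h, lt_self_iff_false, not_false_iff]

/-- The set of non-exceptional finite parameters. -/
def Sfin (P0 Pinf : V →ₗ[ℂ] V →ₗ[ℂ] ℂ) : Set ℂ :=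
  {μ : ℂ | (some μ : Option ℂ) ∉ exceptional P0 Pinf}

/-- The space `L` generated only by the kernels at finite non-exceptional parameters. -/
noncomputable def L2space (P0 Pinf : V →ₗ[ℂ] V →ₗ[ℂ] ℂ) : Submodule ℂ V :=
  ⨆ μ ∈ Sfin P0 Pinf, LinearMap.ker (pencil P0 Pinf (some μ))

lemma ker_le_L2space {P0 Pinf : V →ₗ[ℂ] V →ₗ[ℂ] ℂ} {μ : ℂ} (hμ : μ ∈ Sfin P0 Pinf) :
    LinearMap.ker (pencil P0 Pinf (some μ)) ≤ L2space P0 Pinf :=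
  le_iSup₂ (f := fun μ (_ : μ ∈ Sfin P0 Pinf) => LinearMap.ker (pencil P0 Pinf (some μ))) μ hμ

lemma ker_le_Lspace {P0 Pinf : V →ₗ[ℂ] V →ₗ[ℂ] ℂ} {l : Option ℂ}
    (hl : l ∉ exceptional P0 Pinf) :
    LinearMap.ker (pencil P0 Pinf l) ≤ Lspace P0 Pinf :=
  le_iSup₂ (f := fun l (_ : l ∈ {l : Option ℂ | l ∉ exceptional P0 Pinf}) =>
    LinearMap.ker (pencil P0 Pinf l)) l hl

lemma Sfin_infinite [FiniteDimensional ℂ V] {P0 Pinf : V →ₗ[ℂ] V →ₗ[ℂ] ℂ}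
    (hinfreg : none ∉ exceptional P0 Pinf) : (Sfin P0 Pinf).Infinite := by
  classical
  obtain ⟨x, y, -, hdet⟩ := exists_det_ne_zero Pinf ⊤
    (le_refl (finrank ℂ ((⊤ : Submodule ℂ V).map Pinf)))
  obtain ⟨p, hp1, hp2⟩ := det_pencil_poly P0 Pinf x y
  have hpne : p ≠ 0 := fun h => hdet (hp2 h)
  have hsub : {μ : ℂ | ¬ p.IsRoot μ} ⊆ Sfin P0 Pinf := by
    intro μ hμ
    have hd : (Matrix.of fun i j =>
        pencil P0 Pinf (some μ) (x i) (y j)).det ≠ 0 := by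
      have : (Matrix.of fun i j => pencil P0 Pinf (some μ) (x i) (y j)) =
          (Matrix.of fun i j => P0 (x i) (y j) - μ * Pinf (x i) (y j)) := by
        ext i j
        simp [pencil_some_apply]
      rw [this, ← hp1]
      exact hμ
    have hrank := card_le_finrank_map_of_det_ne_zero (pencil P0 Pinf (some μ)) ⊤
      (fun _ => Submodule.mem_top) hd
    have hsum1 := finrank_map_add_finrank_inf_ker (pencil P0 Pinf (some μ))
      (⊤ : Submodule ℂ V)
    have hsum2 := finrank_map_add_finrank_inf_ker Pinf (⊤ : Submodule ℂ V)
    rw [top_inf_eq] at hsum1 hsum2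
    have hrinf : finrank ℂ ↥(LinearMap.ker Pinf) = genericCorank P0 Pinf := by
      have := not_exceptional_iff.mp hinfreg
      rwa [pencil_none_eq] at this
    have hle : finrank ℂ ↥(LinearMap.ker (pencil P0 Pinf (some μ))) ≤
        genericCorank P0 Pinf := by omega
    have hge := gc_le P0 Pinf (some μ)
    exact not_exceptional_iff.mpr (le_antisymm hle hge)
  apply Set.Infinite.mono hsub
  exact Set.Finite.infinite_compl (Polynomial.finite_setOf_isRoot hpne)

lemma L2_corank_le [FiniteDimensional ℂ V] {P0 Pinf : V →ₗ[ℂ] V →ₗ[ℂ] ℂ}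
    (hinfreg : none ∉ exceptional P0 Pinf) (l : Option ℂ) :
    genericCorank P0 Pinf ≤
      finrank ℂ ↥(L2space P0 Pinf ⊓ LinearMap.ker (pencil P0 Pinf l)) := by
  classical
  by_contra hlt
  push_neg at hlt
  set r := genericCorank P0 Pinf with hrdef
  set L2 := L2space P0 Pinf with hL2
  set d := finrank ℂ L2 with hd
  set k := finrank ℂ (L2.map (pencil P0 Pinf l)) with hk
  have hsum : k + finrank ℂ ↥(L2 ⊓ LinearMap.ker (pencil P0 Pinf l)) = d :=
    finrank_map_add_finrank_inf_ker _ _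
  have hμlt : ∀ μ : ℂ, μ ∈ Sfin P0 Pinf →
      finrank ℂ (L2.map (pencil P0 Pinf (some μ))) < k := by
    intro μ hμ
    have hker : LinearMap.ker (pencil P0 Pinf (some μ)) ≤ L2 := ker_le_L2space hμ
    have hinf2 : L2 ⊓ LinearMap.ker (pencil P0 Pinf (some μ)) =
        LinearMap.ker (pencil P0 Pinf (some μ)) := inf_eq_right.mpr hker
    have hsum2 := finrank_map_add_finrank_inf_ker (pencil P0 Pinf (some μ)) L2
    rw [hinf2] at hsum2
    have hfr : finrank ℂ ↥(LinearMap.ker (pencil P0 Pinf (some μ))) = r :=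
      not_exceptional_iff.mp hμ
    omega
  obtain ⟨x, y, hxN, hdet⟩ := exists_det_ne_zero (pencil P0 Pinf l) L2 (le_refl k)
  obtain ⟨p, hp1, hp2⟩ := det_pencil_poly P0 Pinf x y
  have hvanish : Sfin P0 Pinf ⊆ {μ : ℂ | p.IsRoot μ} := by
    intro μ hμ
    by_contra h0
    have hd2 : (Matrix.of fun i j =>
        pencil P0 Pinf (some μ) (x i) (y j)).det ≠ 0 := by
      have heq : (Matrix.of fun i j => pencil P0 Pinf (some μ) (x i) (y j)) =
          (Matrix.of fun i j => P0 (x i) (y j) - μ * Pinf (x i) (y j)) := by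
        ext i j
        simp [pencil_some_apply]
      rw [heq, ← hp1]
      exact h0
    have := card_le_finrank_map_of_det_ne_zero (pencil P0 Pinf (some μ)) L2 hxN hd2
    exact absurd this (not_le.mpr (hμlt μ hμ))
  have hpz : p = 0 := by
    apply Polynomial.eq_zero_of_infinite_isRoot
    exact Set.Infinite.mono hvanish (Sfin_infinite hinfreg)
  cases l with
  | none =>
    apply hdet
    have heq : (Matrix.of fun i j => pencil P0 Pinf none (x i) (y j)) =
        (Matrix.of fun i j => Pinf (x i) (y j)) := rfl
    rw [heq]
    exact hp2 hpz
  | some lam =>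
    apply hdet
    have heq : (Matrix.of fun i j => pencil P0 Pinf (some lam) (x i) (y j)) =
        (Matrix.of fun i j => P0 (x i) (y j) - lam * Pinf (x i) (y j)) := by
      ext i j
      simp [pencil_some_apply]
    rw [heq, ← hp1, hpz]
    simp

lemma ker_none_le_L2 [FiniteDimensional ℂ V] {P0 Pinf : V →ₗ[ℂ] V →ₗ[ℂ] ℂ}
    (hinfreg : none ∉ exceptional P0 Pinf) :
    LinearMap.ker (pencil P0 Pinf none) ≤ L2space P0 Pinf := by
  have h1 := L2_corank_le hinfreg none
  have h2 : finrank ℂ ↥(LinearMap.ker (pencil P0 Pinf none)) = genericCorank P0 Pinf :=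
    not_exceptional_iff.mp hinfreg
  have h3 : L2space P0 Pinf ⊓ LinearMap.ker (pencil P0 Pinf none) =
      LinearMap.ker (pencil P0 Pinf none) := by
    apply Submodule.eq_of_le_of_finrank_le inf_le_right
    omega
  rw [← h3]
  exact inf_le_left

lemma Lspace_eq_L2 [FiniteDimensional ℂ V] {P0 Pinf : V →ₗ[ℂ] V →ₗ[ℂ] ℂ}
    (hinfreg : none ∉ exceptional P0 Pinf) :
    Lspace P0 Pinf = L2space P0 Pinf := by
  apply le_antisymm
  · apply iSup₂_le
    intro l hl
    cases l with
    | none => exact ker_none_le_L2 hinfreg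
    | some μ => exact ker_le_L2space hl
  · apply iSup₂_le
    intro μ hμ
    exact ker_le_Lspace hμ

lemma mem_Lperp_iff {P0 Pinf : V →ₗ[ℂ] V →ₗ[ℂ] ℂ} {x : V} :
    x ∈ Lperp P0 Pinf ↔ ∀ m ∈ Lspace P0 Pinf, Pinf m x = 0 := by
  rw [Lperp, LinearMap.BilinForm.mem_orthogonal_iff]
  rfl

lemma pinf_L_W {P0 Pinf : V →ₗ[ℂ] V →ₗ[ℂ] ℂ} {m w : V}
    (hm : m ∈ Lspace P0 Pinf) (hw : w ∈ Lperp P0 Pinf) : Pinf m w = 0 :=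
  mem_Lperp_iff.mp hw m hm

lemma p0_L_W [FiniteDimensional ℂ V] {P0 Pinf : V →ₗ[ℂ] V →ₗ[ℂ] ℂ}
    (hinfreg : none ∉ exceptional P0 Pinf) {m w : V}
    (hm : m ∈ Lspace P0 Pinf) (hw : w ∈ Lperp P0 Pinf) : P0 m w = 0 := by
  rw [Lspace_eq_L2 hinfreg] at hm
  have hle : L2space P0 Pinf ≤ LinearMap.ker (P0.flip w) := by
    apply iSup₂_le
    intro μ hμ z hz
    rw [LinearMap.mem_ker, LinearMap.flip_apply]
    rw [ker_pencil_some hz w]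
    rw [pinf_L_W (ker_le_Lspace hμ hz) hw, mul_zero]
  have := hle hm
  rwa [LinearMap.mem_ker, LinearMap.flip_apply] at this

lemma pencil_L_W [FiniteDimensional ℂ V] {P0 Pinf : V →ₗ[ℂ] V →ₗ[ℂ] ℂ}
    (hinfreg : none ∉ exceptional P0 Pinf) (lam : ℂ) {m w : V}
    (hm : m ∈ Lspace P0 Pinf) (hw : w ∈ Lperp P0 Pinf) :
    pencil P0 Pinf (some lam) m w = 0 := by
  rw [pencil_some_apply, p0_L_W hinfreg hm hw, pinf_L_W hm hw, mul_zero, sub_zero]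

lemma ann_perp_eq [FiniteDimensional ℂ V] (P0 Pinf : V →ₗ[ℂ] V →ₗ[ℂ] ℂ) :
    Submodule.dualAnnihilator (Lperp P0 Pinf) = (Lspace P0 Pinf).map Pinf := by
  classical
  set L := Lspace P0 Pinf with hLd
  set ψ : V →ₗ[ℂ] Module.Dual ℂ ↥L := (Pinf.domRestrict L).flip with hψd
  have hker : LinearMap.ker ψ = Lperp P0 Pinf := by
    ext v
    rw [LinearMap.mem_ker, mem_Lperp_iff]
    constructor
    · intro hv n hn
      exact LinearMap.congr_fun hv ⟨n, hn⟩
    · intro hv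
      apply LinearMap.ext
      rintro ⟨n, hn⟩
      exact hv n hn
  have h1 := LinearMap.range_dualMap_eq_dualAnnihilator_ker ψ
  rw [hker] at h1
  rw [← h1]
  have h2 : ψ.dualMap ∘ₗ (Module.evalEquiv ℂ ↥L).toLinearMap = Pinf ∘ₗ L.subtype := by
    apply LinearMap.ext
    intro m
    apply LinearMap.ext
    intro v
    simp [hψd, Module.evalEquiv_apply, LinearMap.dualMap_apply, Module.Dual.eval_apply]
  calc LinearMap.range ψ.dualMap
      = LinearMap.range (ψ.dualMap ∘ₗ (Module.evalEquiv ℂ ↥L).toLinearMap) := by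
        rw [LinearMap.range_comp_of_range_eq_top _ (LinearEquiv.range _)]
    _ = LinearMap.range (Pinf ∘ₗ L.subtype) := by rw [h2]
    _ = L.map Pinf := by rw [LinearMap.range_comp, Submodule.range_subtype]

lemma ker_pinf_le_Lspace [FiniteDimensional ℂ V] {P0 Pinf : V →ₗ[ℂ] V →ₗ[ℂ] ℂ}
    (hinfreg : none ∉ exceptional P0 Pinf) :
    LinearMap.ker Pinf ≤ Lspace P0 Pinf := by
  have := ker_le_Lspace hinfreg
  rwa [pencil_none_eq] at this

lemma finrank_map_pinf [FiniteDimensional ℂ V] {P0 Pinf : V →ₗ[ℂ] V →ₗ[ℂ] ℂ}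
    (hinfreg : none ∉ exceptional P0 Pinf) :
    finrank ℂ ((Lspace P0 Pinf).map Pinf) + genericCorank P0 Pinf =
      finrank ℂ (Lspace P0 Pinf) := by
  have h1 := finrank_map_add_finrank_inf_ker Pinf (Lspace P0 Pinf)
  have h2 : Lspace P0 Pinf ⊓ LinearMap.ker Pinf = LinearMap.ker Pinf :=
    inf_eq_right.mpr (ker_pinf_le_Lspace hinfreg)
  rw [h2] at h1
  have h3 : finrank ℂ ↥(LinearMap.ker Pinf) = genericCorank P0 Pinf := by
    have := not_exceptional_iff.mp hinfreg
    rwa [pencil_none_eq] at this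
  rw [h3] at h1
  exact h1

lemma L_corank_le [FiniteDimensional ℂ V] {P0 Pinf : V →ₗ[ℂ] V →ₗ[ℂ] ℂ}
    (hinfreg : none ∉ exceptional P0 Pinf) (l : Option ℂ) :
    genericCorank P0 Pinf ≤
      finrank ℂ ↥(Lspace P0 Pinf ⊓ LinearMap.ker (pencil P0 Pinf l)) := by
  rw [Lspace_eq_L2 hinfreg]
  exact L2_corank_le hinfreg l

lemma map_pencil_le_ann [FiniteDimensional ℂ V] {P0 Pinf : V →ₗ[ℂ] V →ₗ[ℂ] ℂ}
    (hinfreg : none ∉ exceptional P0 Pinf) (lam : ℂ) :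
    (Lspace P0 Pinf).map (pencil P0 Pinf (some lam)) ≤
      Submodule.dualAnnihilator (Lperp P0 Pinf) := by
  rintro _ ⟨m, hm, rfl⟩
  rw [Submodule.mem_dualAnnihilator]
  intro w hw
  exact pencil_L_W hinfreg lam hm hw

lemma map_pencil_eq [FiniteDimensional ℂ V] {P0 Pinf : V →ₗ[ℂ] V →ₗ[ℂ] ℂ}
    (hinfreg : none ∉ exceptional P0 Pinf) (lam : ℂ) :
    (Lspace P0 Pinf).map (pencil P0 Pinf (some lam)) = (Lspace P0 Pinf).map Pinf := by
  classical
  have hle1 : (Lspace P0 Pinf).map (pencil P0 Pinf (some lam)) ≤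
      (Lspace P0 Pinf).map Pinf := by
    rw [← ann_perp_eq]
    exact map_pencil_le_ann hinfreg lam
  by_cases hexc : (some lam : Option ℂ) ∈ exceptional P0 Pinf
  · -- the reverse inclusion holds term by term
    apply le_antisymm hle1
    have hrw : (Lspace P0 Pinf).map Pinf = (L2space P0 Pinf).map Pinf := by
      rw [Lspace_eq_L2 hinfreg]
    rw [hrw, L2space]
    rw [Submodule.map_iSup]
    apply iSup_le
    intro μ
    rw [Submodule.map_iSup]
    apply iSup_le
    intro hμ
    rintro _ ⟨z, hz, rfl⟩
    have hμlam : μ ≠ lam := by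
      rintro rfl
      exact hμ hexc
    refine ⟨(μ - lam)⁻¹ • z, Submodule.smul_mem _ _ (ker_le_Lspace hμ hz), ?_⟩
    apply LinearMap.ext
    intro v
    rw [map_smul]
    simp only [LinearMap.smul_apply, smul_eq_mul]
    rw [pencil_some_apply, ker_pencil_some hz v]
    have hne : μ - lam ≠ 0 := sub_ne_zero.mpr hμlam
    field_simp
  · -- equality of finranks
    have hker : LinearMap.ker (pencil P0 Pinf (some lam)) ≤ Lspace P0 Pinf :=
      ker_le_Lspace hexc
    have hinf2 : Lspace P0 Pinf ⊓ LinearMap.ker (pencil P0 Pinf (some lam)) =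
        LinearMap.ker (pencil P0 Pinf (some lam)) := inf_eq_right.mpr hker
    have hsum := finrank_map_add_finrank_inf_ker (pencil P0 Pinf (some lam)) (Lspace P0 Pinf)
    rw [hinf2] at hsum
    have hfr : finrank ℂ ↥(LinearMap.ker (pencil P0 Pinf (some lam))) =
        genericCorank P0 Pinf := not_exceptional_iff.mp hexc
    have hsum2 := finrank_map_pinf hinfreg
    apply Submodule.eq_of_le_of_finrank_le hle1
    omega

lemma finrank_L_inf_ker [FiniteDimensional ℂ V] {P0 Pinf : V →ₗ[ℂ] V →ₗ[ℂ] ℂ}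
    (hinfreg : none ∉ exceptional P0 Pinf) (lam : ℂ) :
    finrank ℂ ↥(Lspace P0 Pinf ⊓ LinearMap.ker (pencil P0 Pinf (some lam))) =
      genericCorank P0 Pinf := by
  have hsum := finrank_map_add_finrank_inf_ker (pencil P0 Pinf (some lam)) (Lspace P0 Pinf)
  rw [map_pencil_eq hinfreg lam] at hsum
  have hsum2 := finrank_map_pinf hinfreg
  omega

lemma rad_mem [FiniteDimensional ℂ V] {P0 Pinf : V →ₗ[ℂ] V →ₗ[ℂ] ℂ}
    (hinfreg : none ∉ exceptional P0 Pinf) {x : V}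
    (hx : ∀ y ∈ Lperp P0 Pinf, Pinf x y = 0) : x ∈ Lspace P0 Pinf := by
  have h1 : Pinf x ∈ Submodule.dualAnnihilator (Lperp P0 Pinf) := by
    rw [Submodule.mem_dualAnnihilator]
    exact hx
  rw [ann_perp_eq] at h1
  obtain ⟨m, hm, hme⟩ := h1
  have h2 : x - m ∈ LinearMap.ker Pinf := by
    rw [LinearMap.mem_ker, map_sub, hme, sub_self]
  have h3 : x - m ∈ Lspace P0 Pinf := ker_pinf_le_Lspace hinfreg h2
  have := Submodule.add_mem _ h3 hm
  simpa using this

lemma ker_exc_le_W [FiniteDimensional ℂ V] {P0 Pinf : V →ₗ[ℂ] V →ₗ[ℂ] ℂ}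
    (h0 : ∀ v, P0 v v = 0) (hinf : ∀ v, Pinf v v = 0)
    (hinfreg : none ∉ exceptional P0 Pinf) {lam : ℂ}
    (hexc : (some lam : Option ℂ) ∈ exceptional P0 Pinf) :
    LinearMap.ker (pencil P0 Pinf (some lam)) ≤ Lperp P0 Pinf := by
  intro v hv
  rw [mem_Lperp_iff]
  intro m hm
  rw [Lspace_eq_L2 hinfreg] at hm
  have hle : L2space P0 Pinf ≤ LinearMap.ker (Pinf.flip v) := by
    apply iSup₂_le
    intro μ hμ z hz
    rw [LinearMap.mem_ker, LinearMap.flip_apply]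
    have hμlam : μ ≠ lam := by
      rintro rfl
      exact hμ hexc
    have h1 : P0 z v = μ * Pinf z v := ker_pencil_some hz v
    have h2 : P0 v z = lam * Pinf v z := ker_pencil_some hv z
    have h3 : P0 z v = - P0 v z := skew_of_diag h0 z v
    have h4 : Pinf v z = - Pinf z v := skew_of_diag hinf v z
    have h5 : (μ - lam) * Pinf z v = 0 := by linear_combination - h1 - h2 + h3 - lam * h4
    rcases mul_eq_zero.mp h5 with h6 | h6
    · exact absurd (sub_eq_zero.mp h6) hμlam
    · exact h6
  have := hle hm
  rwa [LinearMap.mem_ker, LinearMap.flip_apply] at this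

/-- The symplectic form induced by `P∞` on the quotient `L^⊥/L`. -/
noncomputable def omegaForm (P0 Pinf : V →ₗ[ℂ] V →ₗ[ℂ] ℂ)
    (hinf : ∀ v, Pinf v v = 0) :
    Qspace P0 Pinf →ₗ[ℂ] Qspace P0 Pinf →ₗ[ℂ] ℂ :=
  Submodule.liftQ (LinPerp P0 Pinf)
    { toFun := fun x => Submodule.liftQ (LinPerp P0 Pinf)
        ((Pinf.compl₁₂ (Lperp P0 Pinf).subtype (Lperp P0 Pinf).subtype) x)
        (by
          intro l hl
          rw [LinearMap.mem_ker, LinearMap.compl₁₂_apply]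
          rw [skew_of_diag hinf]
          exact neg_eq_zero.mpr (pinf_L_W hl x.2))
      map_add' := by
        intro x y
        apply LinearMap.ext
        intro q
        obtain ⟨z, rfl⟩ := Submodule.Quotient.mk_surjective _ q
        simp
      map_smul' := by
        intro c x
        apply LinearMap.ext
        intro q
        obtain ⟨z, rfl⟩ := Submodule.Quotient.mk_surjective _ q
        simp }
    (by
      intro l hl
      rw [LinearMap.mem_ker]
      apply LinearMap.ext
      intro q
      obtain ⟨z, rfl⟩ := Submodule.Quotient.mk_surjective _ q
      simp only [LinearMap.coe_mk, AddHom.coe_mk, Submodule.liftQ_apply,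
        LinearMap.compl₁₂_apply, LinearMap.zero_apply]
      exact pinf_L_W hl z.2)

lemma omegaForm_apply (P0 Pinf : V →ₗ[ℂ] V →ₗ[ℂ] ℂ)
    (hinf : ∀ v, Pinf v v = 0) (x y : ↥(Lperp P0 Pinf)) :
    omegaForm P0 Pinf hinf (Submodule.Quotient.mk x) (Submodule.Quotient.mk y) =
      Pinf (x : V) (y : V) := by
  simp [omegaForm, Submodule.liftQ_apply, LinearMap.compl₁₂_apply]

/-- The recursion operator is diagonalizable iff for each `λ ∈ Λ` the kernel of the
restriction of `P_∞` to `Ker P_λ` has dimension exactly `r`. -/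
theorem stmt15 [FiniteDimensional ℂ V] (P0 Pinf : V →ₗ[ℂ] V →ₗ[ℂ] ℂ)
    (h0 : ∀ v, P0 v v = 0) (hinf : ∀ v, Pinf v v = 0)
    (hinfreg : none ∉ exceptional P0 Pinf)
    (R : Qspace P0 Pinf →ₗ[ℂ] Qspace P0 Pinf)
    (hR : ∀ ξ ξ' : ↥(Lperp P0 Pinf),
      R (Submodule.Quotient.mk ξ) = Submodule.Quotient.mk ξ' →
      ∀ η : ↥(Lperp P0 Pinf),
        pencil P0 Pinf none (ξ' : V) (η : V) = pencil P0 Pinf (some 0) (ξ : V) (η : V)) :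
    (⨆ μ : ℂ, Module.End.eigenspace R μ) = ⊤ ↔
      ∀ l : ℂ, (some l : Option ℂ) ∈ exceptional P0 Pinf →
        finrank ℂ ↥(LinearMap.ker (pencil P0 Pinf (some l)) ⊓
          LinearMap.BilinForm.orthogonal (pencil P0 Pinf none)
            (LinearMap.ker (pencil P0 Pinf (some l)))) = genericCorank P0 Pinf := by
  classical
  set ω := omegaForm P0 Pinf hinf with hωdef
  have hωapp : ∀ x y : ↥(Lperp P0 Pinf),
      ω (Submodule.Quotient.mk x) (Submodule.Quotient.mk y) = Pinf (x : V) (y : V) :=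
    omegaForm_apply P0 Pinf hinf
  have hP0 : ∀ x y : V, pencil P0 Pinf (some 0) x y = P0 x y := by
    intro x y; rw [pencil_some_apply]; ring
  -- self-adjointness of R with respect to ω
  have hsa : ∀ a b : Qspace P0 Pinf, ω (R a) b = ω a (R b) := by
    intro a b
    obtain ⟨x, rfl⟩ := Submodule.Quotient.mk_surjective _ a
    obtain ⟨y, rfl⟩ := Submodule.Quotient.mk_surjective _ b
    obtain ⟨x', hx'⟩ := Submodule.Quotient.mk_surjective _ (R (Submodule.Quotient.mk x))
    obtain ⟨y', hy'⟩ := Submodule.Quotient.mk_surjective _ (R (Submodule.Quotient.mk y))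
    rw [← hx', ← hy', hωapp, hωapp]
    have h1 := hR x x' hx'.symm y
    have h2 := hR y y' hy'.symm x
    rw [pencil_none_apply, hP0] at h1 h2
    rw [h1]
    calc P0 (x:V) (y:V) = - P0 (y:V) (x:V) := skew_of_diag h0 _ _
      _ = - Pinf (y':V) (x:V) := by rw [h2]
      _ = Pinf (x:V) (y':V) := (skew_of_diag hinf (x:V) (y':V)).symm
  -- nondegeneracy of ω
  have hnd : ∀ a : Qspace P0 Pinf, (∀ b, ω a b = 0) → a = 0 := by
    intro a ha
    obtain ⟨x, rfl⟩ := Submodule.Quotient.mk_surjective _ a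
    rw [Submodule.Quotient.mk_eq_zero]
    show (x : V) ∈ Lspace P0 Pinf
    apply rad_mem hinfreg
    intro y hy
    have := ha (Submodule.Quotient.mk ⟨y, hy⟩)
    rwa [hωapp] at this
  -- eigenvectors give pencil radical vectors
  have hBW : ∀ (lam : ℂ) (ξ : ↥(Lperp P0 Pinf)),
      R (Submodule.Quotient.mk ξ) = lam • Submodule.Quotient.mk ξ →
      ∃ m ∈ Lspace P0 Pinf,
        ((ξ : V) - m) ∈ LinearMap.ker (pencil P0 Pinf (some lam)) := by
    intro lam ξ hξ
    have h1 : R (Submodule.Quotient.mk ξ) = Submodule.Quotient.mk (lam • ξ) := by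
      rw [Submodule.Quotient.mk_smul]; exact hξ
    have h2 := hR ξ (lam • ξ) h1
    have h3 : pencil P0 Pinf (some lam) (ξ : V) ∈
        Submodule.dualAnnihilator (Lperp P0 Pinf) := by
      rw [Submodule.mem_dualAnnihilator]
      intro w hw
      have h4 := h2 ⟨w, hw⟩
      rw [pencil_none_apply, hP0] at h4
      have h5 : Pinf ((lam • ξ : ↥(Lperp P0 Pinf)) : V) w = lam * Pinf (ξ : V) w := by
        rw [Submodule.coe_smul, map_smul]
        simp [smul_eq_mul]
      rw [h5] at h4
      rw [pencil_some_apply, ← h4]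
      ring
    rw [ann_perp_eq, ← map_pencil_eq hinfreg lam] at h3
    obtain ⟨m, hm, hme⟩ := h3
    refine ⟨m, hm, ?_⟩
    rw [LinearMap.mem_ker, map_sub, hme, sub_self]
  -- kernel vectors are eigenvectors
  have hmkE : ∀ (lam : ℂ), (some lam : Option ℂ) ∈ exceptional P0 Pinf →
      ∀ x : ↥(Lperp P0 Pinf), (x : V) ∈ LinearMap.ker (pencil P0 Pinf (some lam)) →
      R (Submodule.Quotient.mk x) = lam • Submodule.Quotient.mk x := by
    intro lam _hexc x hx
    obtain ⟨ξ', hξ'⟩ := Submodule.Quotient.mk_surjective _ (R (Submodule.Quotient.mk x))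
    have h1 := hR x ξ' hξ'.symm
    rw [← hξ', ← Submodule.Quotient.mk_smul, Submodule.Quotient.eq]
    show ((ξ' - lam • x : ↥(Lperp P0 Pinf)) : V) ∈ Lspace P0 Pinf
    have hcoe : ((ξ' - lam • x : ↥(Lperp P0 Pinf)) : V) = (ξ' : V) - lam • (x : V) := by
      simp
    rw [hcoe]
    apply rad_mem hinfreg
    intro y hy
    have h2 := h1 ⟨y, hy⟩
    rw [pencil_none_apply, hP0] at h2
    have h3 : P0 (x : V) y = lam * Pinf (x : V) y := ker_pencil_some hx y
    rw [map_sub, map_smul]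
    simp only [LinearMap.sub_apply, LinearMap.smul_apply, smul_eq_mul]
    rw [h2, h3]
    ring
  -- description of the eigenspaces at exceptional parameters
  have hEdesc : ∀ (lam : ℂ), (some lam : Option ℂ) ∈ exceptional P0 Pinf →
      ∀ a ∈ Module.End.eigenspace R lam, ∃ x : ↥(Lperp P0 Pinf),
        (x : V) ∈ LinearMap.ker (pencil P0 Pinf (some lam)) ∧
          Submodule.Quotient.mk x = a := by
    intro lam hexc a ha
    obtain ⟨ξ, rfl⟩ := Submodule.Quotient.mk_surjective _ a
    have hξ : R (Submodule.Quotient.mk ξ) = lam • Submodule.Quotient.mk ξ :=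
      Module.End.mem_eigenspace_iff.mp ha
    obtain ⟨m, hm, hk⟩ := hBW lam ξ hξ
    have hkW : ((ξ : V) - m) ∈ Lperp P0 Pinf := ker_exc_le_W h0 hinf hinfreg hexc hk
    refine ⟨⟨(ξ : V) - m, hkW⟩, hk, ?_⟩
    rw [Submodule.Quotient.eq]
    show (((⟨(ξ : V) - m, hkW⟩ : ↥(Lperp P0 Pinf)) - ξ : ↥(Lperp P0 Pinf)) : V) ∈
      Lspace P0 Pinf
    have hcoe : (((⟨(ξ : V) - m, hkW⟩ : ↥(Lperp P0 Pinf)) - ξ : ↥(Lperp P0 Pinf)) : V)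
        = -m := by simp
    rw [hcoe]
    exact Submodule.neg_mem _ hm
  -- eigenspaces at non-exceptional parameters vanish
  have hEbot : ∀ (lam : ℂ), (some lam : Option ℂ) ∉ exceptional P0 Pinf →
      Module.End.eigenspace R lam = ⊥ := by
    intro lam hexc
    rw [eq_bot_iff]
    intro a ha
    obtain ⟨ξ, rfl⟩ := Submodule.Quotient.mk_surjective _ a
    have hξ : R (Submodule.Quotient.mk ξ) = lam • Submodule.Quotient.mk ξ :=
      Module.End.mem_eigenspace_iff.mp ha
    obtain ⟨m, hm, hk⟩ := hBW lam ξ hξ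
    have h1 : ((ξ : V) - m) ∈ Lspace P0 Pinf := ker_le_Lspace hexc hk
    have h2 : (ξ : V) ∈ Lspace P0 Pinf := by
      have := Submodule.add_mem _ h1 hm
      simpa using this
    rw [Submodule.mem_bot, Submodule.Quotient.mk_eq_zero]
    exact h2
  -- orthogonality of distinct eigenspaces
  have hEorth : ∀ (lam mu : ℂ) (a b : Qspace P0 Pinf),
      a ∈ Module.End.eigenspace R lam → b ∈ Module.End.eigenspace R mu →
      lam ≠ mu → ω a b = 0 := by
    intro lam mu a b ha hb hne
    have h1 := hsa a b
    rw [Module.End.mem_eigenspace_iff.mp ha, Module.End.mem_eigenspace_iff.mp hb] at h1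
    rw [map_smul] at h1
    simp only [LinearMap.smul_apply, map_smul, smul_eq_mul] at h1
    have h2 : (lam - mu) * ω a b = 0 := by linear_combination h1
    rcases mul_eq_zero.mp h2 with h | h
    · exact absurd (sub_eq_zero.mp h) hne
    · exact h
  -- the intersection `L ⊓ Ker P_λ` sits inside the degenerate part
  have hKLle : ∀ (lam : ℂ), (some lam : Option ℂ) ∈ exceptional P0 Pinf →
      Lspace P0 Pinf ⊓ LinearMap.ker (pencil P0 Pinf (some lam)) ≤
      LinearMap.ker (pencil P0 Pinf (some lam)) ⊓
        LinearMap.BilinForm.orthogonal (pencil P0 Pinf none)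
          (LinearMap.ker (pencil P0 Pinf (some lam))) := by
    intro lam hexc x hx
    refine ⟨hx.2, fun n hn => ?_⟩
    have hnW : n ∈ Lperp P0 Pinf := ker_exc_le_W h0 hinf hinfreg hexc hn
    show pencil P0 Pinf none n x = 0
    rw [pencil_none_apply, skew_of_diag hinf n x]
    exact neg_eq_zero.mpr (pinf_L_W hx.1 hnW)
  constructor
  · -- diagonalizability implies the dimension condition
    intro htop lam hexc
    have hNL : LinearMap.ker (pencil P0 Pinf (some lam)) ⊓
        LinearMap.BilinForm.orthogonal (pencil P0 Pinf none)
          (LinearMap.ker (pencil P0 Pinf (some lam))) ≤ Lspace P0 Pinf := by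
      intro x hx
      have hxW : x ∈ Lperp P0 Pinf := ker_exc_le_W h0 hinf hinfreg hexc hx.1
      have hzero : ∀ b : Qspace P0 Pinf,
          ω (Submodule.Quotient.mk ⟨x, hxW⟩) b = 0 := by
        intro b
        have hb : b ∈ (⨆ mu : ℂ, Module.End.eigenspace R mu) := by
          rw [htop]; trivial
        have hle : (⨆ mu : ℂ, Module.End.eigenspace R mu) ≤
            LinearMap.ker (ω (Submodule.Quotient.mk ⟨x, hxW⟩)) := by
          apply iSup_le
          intro mu b' hb'
          rw [LinearMap.mem_ker]
          by_cases hmu : mu = lam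
          · subst hmu
            obtain ⟨u, hu, rfl⟩ := hEdesc mu hexc b' hb'
            rw [hωapp]
            have h6 : pencil P0 Pinf none (u : V) x = 0 := hx.2 (u : V) hu
            rw [pencil_none_apply] at h6
            rw [skew_of_diag hinf]
            exact neg_eq_zero.mpr h6
          · have hEl : Submodule.Quotient.mk ⟨x, hxW⟩ ∈ Module.End.eigenspace R lam :=
              Module.End.mem_eigenspace_iff.mpr (hmkE lam hexc ⟨x, hxW⟩ hx.1)
            exact hEorth lam mu _ _ hEl hb' (Ne.symm hmu)
        exact hle hb
      have h7 := hnd _ hzero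
      rw [Submodule.Quotient.mk_eq_zero] at h7
      exact h7
    have heq : LinearMap.ker (pencil P0 Pinf (some lam)) ⊓
        LinearMap.BilinForm.orthogonal (pencil P0 Pinf none)
          (LinearMap.ker (pencil P0 Pinf (some lam))) =
        Lspace P0 Pinf ⊓ LinearMap.ker (pencil P0 Pinf (some lam)) :=
      le_antisymm (le_inf hNL inf_le_left) (hKLle lam hexc)
    rw [heq]
    exact finrank_L_inf_ker hinfreg lam
  · -- the dimension condition implies diagonalizability
    intro hcond
    have htop := Module.End.iSup_maxGenEigenspace_eq_top R
    rw [← top_le_iff, ← htop]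
    apply iSup_mono
    intro mu
    rw [← Module.End.iSup_genEigenspace_eq]
    apply iSup_le
    intro k
    induction k with
    | zero =>
      rw [Nat.cast_zero, Module.End.genEigenspace_zero]
      exact bot_le
    | succ k ih =>
      intro v hv
      have hv' : ((R - mu • 1) ^ (k + 1)) v = 0 := by
        rw [Module.End.mem_genEigenspace_nat, LinearMap.mem_ker] at hv
        exact hv
      have hu : (R - mu • 1) v ∈ Module.End.eigenspace R mu := by
        apply ih
        rw [Module.End.mem_genEigenspace_nat, LinearMap.mem_ker]
        show ((R - mu • 1) ^ k) ((R - mu • 1) v) = 0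
        rw [← Module.End.mul_apply, ← pow_succ]
        exact hv'
      have hu0 : (R - mu • 1) v = 0 := by
        by_cases hexc : (some mu : Option ℂ) ∈ exceptional P0 Pinf
        · obtain ⟨xu, hxu, hmk⟩ := hEdesc mu hexc _ hu
          have horthprop : ∀ b ∈ Module.End.eigenspace R mu, ω ((R - mu • 1) v) b = 0 := by
            intro b hb
            have h1 : ω ((R - mu • 1) v) b = ω (R v) b - mu * ω v b := by
              simp only [LinearMap.sub_apply, LinearMap.smul_apply, Module.End.one_apply,
                map_sub, map_smul]
              simp [smul_eq_mul]
            rw [h1, hsa, Module.End.mem_eigenspace_iff.mp hb, map_smul]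
            simp only [smul_eq_mul]
            ring
          have hxuN : (xu : V) ∈ LinearMap.ker (pencil P0 Pinf (some mu)) ⊓
              LinearMap.BilinForm.orthogonal (pencil P0 Pinf none)
                (LinearMap.ker (pencil P0 Pinf (some mu))) := by
            refine ⟨hxu, fun n hn => ?_⟩
            have hnW : n ∈ Lperp P0 Pinf := ker_exc_le_W h0 hinf hinfreg hexc hn
            show pencil P0 Pinf none n (xu : V) = 0
            rw [pencil_none_apply, skew_of_diag hinf]
            apply neg_eq_zero.mpr
            have hbE : Submodule.Quotient.mk ⟨n, hnW⟩ ∈ Module.End.eigenspace R mu :=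
              Module.End.mem_eigenspace_iff.mpr (hmkE mu hexc ⟨n, hnW⟩ hn)
            have h8 := horthprop _ hbE
            rw [← hmk, hωapp] at h8
            exact h8
          have hN := hcond mu hexc
          have hKL := finrank_L_inf_ker hinfreg mu
          have heq : Lspace P0 Pinf ⊓ LinearMap.ker (pencil P0 Pinf (some mu)) =
              LinearMap.ker (pencil P0 Pinf (some mu)) ⊓
                LinearMap.BilinForm.orthogonal (pencil P0 Pinf none)
                  (LinearMap.ker (pencil P0 Pinf (some mu))) := by
            apply Submodule.eq_of_le_of_finrank_le (hKLle mu hexc)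
            omega
          have hxuL : (xu : V) ∈ Lspace P0 Pinf := by
            rw [← heq] at hxuN
            exact hxuN.1
          rw [← hmk, Submodule.Quotient.mk_eq_zero]
          exact hxuL
        · rw [hEbot mu hexc] at hu
          simpa using hu
      rw [Module.End.mem_eigenspace_iff]
      have h10 : R v - mu • v = 0 := by
        simpa [LinearMap.sub_apply, LinearMap.smul_apply, Module.End.one_apply] using hu0
      exact sub_eq_zero.mp h10
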